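/- arXiv:1507.03291 — 8 statements merged into one kernel-verified Lean document; each statement's English description precedes it below -/
import Mathlib

section
/- The Kuhn-Tucker set Z equals the intersection over all (a,a*) ∈ gra A and (b,b*) ∈ gra B of the half-spaces H_{a,b} = {(x,v*) ∈ H ⊕ G : ⟨x, a*+L*b*⟩ + ⟨b-La, v*⟩ ≤ ⟨a,a*⟩+⟨b,b*⟩}. -/
open scoped InnerProductSpace

/-- A monotone set-valued operator on a real inner product space. -/
def IsMonotoneOp {H : Type*} [NormedAddCommGroup H] [InnerProductSpace ℝ H]
    (A : H → Set H) : Prop :=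
  ∀ x y u v, u ∈ A x → v ∈ A y → 0 ≤ ⟪x - y, u - v⟫_ℝ

/-- A maximally monotone set-valued operator. -/
def IsMaxMonotone {H : Type*} [NormedAddCommGroup H] [InnerProductSpace ℝ H]
    (A : H → Set H) : Prop :=
  IsMonotoneOp A ∧ ∀ x u, (∀ y v, v ∈ A y → 0 ≤ ⟪x - y, u - v⟫_ℝ) → u ∈ A x

lemma key_identity {H G : Type*} [NormedAddCommGroup H] [InnerProductSpace ℝ H] [CompleteSpace H]
    [NormedAddCommGroup G] [InnerProductSpace ℝ G] [CompleteSpace G]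
    (L : H →L[ℝ] G) (x a a' : H) (v b b' : G) :
    ⟪x - a, -(ContinuousLinearMap.adjoint L v) - a'⟫_ℝ + ⟪L x - b, v - b'⟫_ℝ =
      (⟪a, a'⟫_ℝ + ⟪b, b'⟫_ℝ) -
        (⟪x, a' + ContinuousLinearMap.adjoint L b'⟫_ℝ + ⟪b - L a, v⟫_ℝ) := by
  simp only [inner_sub_left, inner_sub_right, inner_add_right, inner_neg_right,
    ContinuousLinearMap.adjoint_inner_right, map_sub]
  ring

/-- The Kuhn-Tucker set equals the intersection, over all `(a,a*) ∈ gra A` and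
`(b,b*) ∈ gra B`, of the half-spaces
`H_{a,b} = {(x,v*) : ⟨x, a*+L*b*⟩ + ⟨b-La, v*⟩ ≤ ⟨a,a*⟩+⟨b,b*⟩}`. -/
theorem kuhnTucker_eq_iInter_halfspaces
    {H G : Type*} [NormedAddCommGroup H] [InnerProductSpace ℝ H] [CompleteSpace H]
    [NormedAddCommGroup G] [InnerProductSpace ℝ G] [CompleteSpace G]
    (A : H → Set H) (B : G → Set G)
    (hA : IsMaxMonotone A) (hB : IsMaxMonotone B)
    (L : H →L[ℝ] G) :
    {p : H × G | -(ContinuousLinearMap.adjoint L p.2) ∈ A p.1 ∧ p.2 ∈ B (L p.1)} =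
      ⋂ (a : H) (a' : H) (_ : a' ∈ A a) (b : G) (b' : G) (_ : b' ∈ B b),
        {p : H × G |
          ⟪p.1, a' + ContinuousLinearMap.adjoint L b'⟫_ℝ + ⟪b - L a, p.2⟫_ℝ ≤
            ⟪a, a'⟫_ℝ + ⟪b, b'⟫_ℝ} := by
  ext p
  simp only [Set.mem_setOf_eq, Set.mem_iInter]
  constructor
  · rintro ⟨h1, h2⟩ a a' ha b b' hb
    have m1 := hA.1 p.1 a _ _ h1 ha
    have m2 := hB.1 (L p.1) b _ _ h2 hb
    have k := key_identity L p.1 a a' p.2 b b'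
    linarith
  · intro hp
    have hw : ∃ b b', b' ∈ B b ∧ ⟪L p.1 - b, p.2 - b'⟫_ℝ ≤ 0 := by
      by_cases h : p.2 ∈ B (L p.1)
      · exact ⟨L p.1, p.2, h, by simp⟩
      · by_contra hc
        push_neg at hc
        exact h (hB.2 _ _ fun b b' hb => le_of_lt (hc b b' hb))
    obtain ⟨b, b', hb, hble⟩ := hw
    have hAx : -(ContinuousLinearMap.adjoint L p.2) ∈ A p.1 := by
      refine hA.2 _ _ fun a a' ha => ?_
      have k := key_identity L p.1 a a' p.2 b b'
      have := hp a a' ha b b' hb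
      linarith
    refine ⟨hAx, hB.2 _ _ fun b2 b2' hb2 => ?_⟩
    have k := key_identity L p.1 p.1 (-(ContinuousLinearMap.adjoint L p.2)) p.2 b2 b2'
    have h0 : ⟪p.1 - p.1, -(ContinuousLinearMap.adjoint L p.2) -
        -(ContinuousLinearMap.adjoint L p.2)⟫_ℝ = 0 := by simp
    have := hp p.1 (-(ContinuousLinearMap.adjoint L p.2)) hAx b2 b2' hb2
    linarith
end

section
/- Let (aₙ,aₙ*) be a sequence in gra A and (bₙ,bₙ*) a sequence in gra B, and let x ∈ H, v* ∈ G. If aₙ ⇀ x weakly, bₙ* ⇀ v* weakly, aₙ* + L*bₙ* → 0 strongly, and Laₙ - bₙ → 0 strongly, then (x,v*) ∈ Z, i.e., -L*v* ∈ Ax and Lx ∈ B⁻¹v*. -/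
open scoped InnerProductSpace

open Filter Topology

/-- A weakly convergent sequence is norm bounded (Banach–Steinhaus). -/
lemma bounded_of_weak_conv {H : Type*} [NormedAddCommGroup H] [InnerProductSpace ℝ H]
    [CompleteSpace H] (c : ℕ → H) (p : H)
    (h : ∀ w : H, Tendsto (fun n => ⟪c n, w⟫_ℝ) atTop (𝓝 ⟪p, w⟫_ℝ)) :
    ∃ M : ℝ, ∀ n, ‖c n‖ ≤ M := by
  obtain ⟨C, hC⟩ := banach_steinhaus (g := fun n => innerSL ℝ (c n)) (fun w => by
    obtain ⟨C, hC⟩ := ((h w).norm).bddAbove_range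
    exact ⟨C, fun n => hC (Set.mem_range_self n)⟩)
  refine ⟨C, fun n => ?_⟩
  simpa [innerSL_apply_norm] using hC n

/-- Inner product of a bounded sequence with a null sequence tends to zero. -/
lemma inner_tendsto_zero {H : Type*} [NormedAddCommGroup H] [InnerProductSpace ℝ H]
    (c e : ℕ → H) (M : ℝ) (hb : ∀ n, ‖c n‖ ≤ M)
    (he : Tendsto e atTop (𝓝 0)) :
    Tendsto (fun n => ⟪c n, e n⟫_ℝ) atTop (𝓝 0) := by
  have hg : Tendsto (fun n => M * ‖e n‖) atTop (𝓝 0) := by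
    simpa using tendsto_const_nhds.mul he.norm
  refine squeeze_zero_norm (fun n => ?_) hg
  calc ‖⟪c n, e n⟫_ℝ‖ ≤ ‖c n‖ * ‖e n‖ := norm_inner_le_norm _ _
    _ ≤ M * ‖e n‖ := mul_le_mul_of_nonneg_right (hb n) (norm_nonneg _)

/-- If `(aₙ,aₙ*) ∈ gra A`, `(bₙ,bₙ*) ∈ gra B`, `aₙ ⇀ x`, `bₙ* ⇀ v*` weakly,
`aₙ* + L*bₙ* → 0` and `Laₙ - bₙ → 0` strongly, then `(x,v*)` is a Kuhn-Tucker
point: `-L*v* ∈ Ax` and `Lx ∈ B⁻¹v*`. -/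
theorem kuhnTucker_of_graph_limits
    {H G : Type*} [NormedAddCommGroup H] [InnerProductSpace ℝ H] [CompleteSpace H]
    [NormedAddCommGroup G] [InnerProductSpace ℝ G] [CompleteSpace G]
    (A : H → Set H) (B : G → Set G)
    (hA : IsMaxMonotone A) (hB : IsMaxMonotone B)
    (L : H →L[ℝ] G)
    (a a' : ℕ → H) (b b' : ℕ → G)
    (hgraA : ∀ n, a' n ∈ A (a n)) (hgraB : ∀ n, b' n ∈ B (b n))
    (x : H) (v : G)
    (haw : ∀ w : H, Tendsto (fun n => ⟪a n, w⟫_ℝ) atTop (𝓝 ⟪x, w⟫_ℝ))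
    (hbw : ∀ w : G, Tendsto (fun n => ⟪b' n, w⟫_ℝ) atTop (𝓝 ⟪v, w⟫_ℝ))
    (hsum : Tendsto (fun n => a' n + ContinuousLinearMap.adjoint L (b' n)) atTop (𝓝 0))
    (hLab : Tendsto (fun n => L (a n) - b n) atTop (𝓝 0)) :
    -(ContinuousLinearMap.adjoint L v) ∈ A x ∧ v ∈ B (L x) := by
  set L' := ContinuousLinearMap.adjoint L with hL'
  obtain ⟨Ma, hMa⟩ := bounded_of_weak_conv a x haw
  obtain ⟨Mb, hMb⟩ := bounded_of_weak_conv b' v hbw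
  have key : ∀ y u, u ∈ A y → ∀ z w, w ∈ B z →
      0 ≤ ⟪x - y, -(L' v) - u⟫_ℝ + ⟪L x - z, v - w⟫_ℝ := by
    intro y u hu z w hw
    set e : ℕ → H := fun n => a' n + L' (b' n) with he
    set d : ℕ → G := fun n => L (a n) - b n with hd
    set S : ℕ → ℝ := fun n => ⟪a n - y, a' n - u⟫_ℝ + ⟪b n - z, b' n - w⟫_ℝ with hS
    have hSnonneg : ∀ n, 0 ≤ S n := fun n =>
      add_nonneg (hA.1 _ _ _ _ (hgraA n) hu) (hB.1 _ _ _ _ (hgraB n) hw)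
    have hident : ∀ n, S n =
        ⟪a n, e n⟫_ℝ - ⟪b' n, d n⟫_ℝ - ⟪a n, u⟫_ℝ - ⟪y, e n⟫_ℝ + ⟪b' n, L y⟫_ℝ
          + ⟪y, u⟫_ℝ - ⟪a n, L' w⟫_ℝ + ⟪d n, w⟫_ℝ - ⟪b' n, z⟫_ℝ + ⟪z, w⟫_ℝ := by
      intro n
      simp only [hS, he, hd, hL', inner_sub_left, inner_sub_right, inner_add_right,
        ContinuousLinearMap.adjoint_inner_right]
      rw [real_inner_comm (b' n) (L (a n)), real_inner_comm (b' n) (b n),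
        real_inner_comm (b' n) (L y), real_inner_comm (b' n) z]
      ring
    have t1 : Tendsto (fun n => ⟪a n, e n⟫_ℝ) atTop (𝓝 0) :=
      inner_tendsto_zero a e Ma hMa hsum
    have t2 : Tendsto (fun n => ⟪b' n, d n⟫_ℝ) atTop (𝓝 0) :=
      inner_tendsto_zero b' d Mb hMb hLab
    have t3 : Tendsto (fun n => ⟪a n, u⟫_ℝ) atTop (𝓝 ⟪x, u⟫_ℝ) := haw u
    have t4 : Tendsto (fun n => ⟪y, e n⟫_ℝ) atTop (𝓝 0) := by
      simpa using (tendsto_const_nhds (x := y)).inner hsum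
    have t5 : Tendsto (fun n => ⟪b' n, L y⟫_ℝ) atTop (𝓝 ⟪v, L y⟫_ℝ) := hbw (L y)
    have t7 : Tendsto (fun n => ⟪a n, L' w⟫_ℝ) atTop (𝓝 ⟪x, L' w⟫_ℝ) := haw (L' w)
    have t8 : Tendsto (fun n => ⟪d n, w⟫_ℝ) atTop (𝓝 0) := by
      simpa using hLab.inner (tendsto_const_nhds (x := w))
    have t9 : Tendsto (fun n => ⟪b' n, z⟫_ℝ) atTop (𝓝 ⟪v, z⟫_ℝ) := hbw z
    have hlim : Tendsto S atTop
        (𝓝 (0 - 0 - ⟪x, u⟫_ℝ - 0 + ⟪v, L y⟫_ℝ + ⟪y, u⟫_ℝ - ⟪x, L' w⟫_ℝ + 0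
          - ⟪v, z⟫_ℝ + ⟪z, w⟫_ℝ)) := by
      rw [funext hident]
      exact ((((((((t1.sub t2).sub t3).sub t4).add t5).add tendsto_const_nhds).sub
        t7).add t8).sub t9).add tendsto_const_nhds
    have h0 := ge_of_tendsto hlim (Eventually.of_forall hSnonneg)
    have heq : ⟪x - y, -(L' v) - u⟫_ℝ + ⟪L x - z, v - w⟫_ℝ =
        0 - 0 - ⟪x, u⟫_ℝ - 0 + ⟪v, L y⟫_ℝ + ⟪y, u⟫_ℝ - ⟪x, L' w⟫_ℝ + 0
          - ⟪v, z⟫_ℝ + ⟪z, w⟫_ℝ := by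
      simp only [hL', map_sub, inner_sub_left, inner_sub_right, inner_neg_right,
        ContinuousLinearMap.adjoint_inner_right]
      rw [real_inner_comm (L y) v, real_inner_comm z v]
      ring
    linarith [h0, heq.ge]
  have hBmem : v ∈ B (L x) := by
    refine hB.2 (L x) v (fun z w hw => ?_)
    by_contra hneg
    push_neg at hneg
    have hAmem : -(L' v) ∈ A x := by
      refine hA.2 x (-(L' v)) (fun y u hu => ?_)
      have := key y u hu z w hw
      linarith
    have := key x (-(L' v)) hAmem z w hw
    simp only [sub_self, inner_zero_left] at this
    linarith
  refine ⟨?_, hBmem⟩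
  refine hA.2 x (-(L' v)) (fun y u hu => ?_)
  have := key y u hu (L x) v hBmem
  simp only [sub_self, inner_zero_left] at this
  linarith
end

section
/- Let K be a real Hilbert space, (x,y,z) ∈ K³, and define H(x,y) = {h ∈ K : ⟨h-y, x-y⟩ ≤ 0}. Set χ = ⟨x-y, y-z⟩, μ = ‖x-y‖², ν = ‖y-z‖², ρ = μν - χ². If ρ = 0 and χ < 0, then H(x,y) ∩ H(y,z) = ∅. -/
open scoped InnerProductSpace

/-- The half-space through `y` with outer normal `x - y`. -/
def haugH {E : Type*} [NormedAddCommGroup E] [InnerProductSpace ℝ E] (x y : E) : Set E :=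
  {h : E | ⟪h - y, x - y⟫_ℝ ≤ 0}

/-- If `ρ = μν - χ² = 0` and `χ < 0`, then `H(x,y) ∩ H(y,z) = ∅`. -/
theorem haugazeau_empty
    {E : Type*} [NormedAddCommGroup E] [InnerProductSpace ℝ E] [CompleteSpace E]
    (x y z : E)
    (χ μ ν ρ : ℝ)
    (hχ : χ = ⟪x - y, y - z⟫_ℝ) (hμ : μ = ‖x - y‖ ^ 2) (hν : ν = ‖y - z‖ ^ 2)
    (hρ : ρ = μ * ν - χ ^ 2)
    (h0 : ρ = 0) (hneg : χ < 0) :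
    haugH x y ∩ haugH y z = ∅ := by
  set u := x - y with hu
  set v := y - z with hv
  have hvν : ⟪v, v⟫_ℝ = ν := by rw [real_inner_self_eq_norm_sq, hν]
  have huμ : ⟪u, u⟫_ℝ = μ := by rw [real_inner_self_eq_norm_sq, hμ]
  have hνpos : 0 < ν := by
    rcases lt_or_eq_of_le (by positivity : (0:ℝ) ≤ ‖v‖ ^ 2) with h | h
    · rw [hν]; exact h
    · exfalso
      have : v = 0 := by
        have := pow_eq_zero_iff (n := 2) (by norm_num) |>.mp h.symm
        exact norm_eq_zero.mp this
      rw [hχ, this, inner_zero_right] at hneg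
      exact lt_irrefl 0 hneg
  -- Cauchy–Schwarz equality: ν • u = χ • v
  have key : ν • u = χ • v := by
    have hw : ‖ν • u - χ • v‖ ^ 2 = 0 := by
      rw [← real_inner_self_eq_norm_sq]
      have hvu : ⟪v, u⟫_ℝ = χ := by rw [real_inner_comm, ← hχ]
      simp only [inner_sub_left, inner_sub_right, real_inner_smul_left,
        real_inner_smul_right, huμ, hvν, ← hχ, hvu]
      have h1 : μ * ν - χ ^ 2 = 0 := by rw [← hρ, h0]
      nlinarith [h1]
    have := norm_eq_zero.mp (pow_eq_zero_iff (n := 2) (by norm_num) |>.mp hw)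
    exact sub_eq_zero.mp this
  ext h
  simp only [Set.mem_inter_iff, Set.mem_empty_iff_false, iff_false, haugH, Set.mem_setOf_eq]
  rintro ⟨h1, h2⟩
  -- h1 : ⟪h - y, u⟫ ≤ 0, h2 : ⟪h - z, v⟫ ≤ 0
  have hsplit : h - z = (h - y) + v := by rw [hv]; abel
  have h2' : ⟪h - y, v⟫_ℝ + ν ≤ 0 := by
    rw [hsplit, inner_add_left, hvν] at h2; linarith
  have hkey : ν * ⟪h - y, u⟫_ℝ = χ * ⟪h - y, v⟫_ℝ := by
    rw [← real_inner_smul_right, ← real_inner_smul_right, key]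
  nlinarith [h1, h2', hkey, hνpos, hneg, mul_nonneg (le_of_lt hνpos) (neg_nonneg.mpr h1)]
end

section
/- Let K be a real Hilbert space, (x,y,z) ∈ K³, H(x,y) = {h : ⟨h-y, x-y⟩ ≤ 0}, χ = ⟨x-y,y-z⟩, μ = ‖x-y‖², ν = ‖y-z‖², ρ = μν - χ². If ρ = 0 and χ ≥ 0, then z ∈ H(x,y) ∩ H(y,z) and z is the projection of x onto H(x,y) ∩ H(y,z). -/
open scoped InnerProductSpace

/-- If `ρ = 0` and `χ ≥ 0`, then `z` belongs to `H(x,y) ∩ H(y,z)` and is the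
projection of `x` onto that set. -/
theorem haugazeau_proj_eq_z
    {E : Type*} [NormedAddCommGroup E] [InnerProductSpace ℝ E] [CompleteSpace E]
    (x y z : E)
    (χ μ ν ρ : ℝ)
    (hχ : χ = ⟪x - y, y - z⟫_ℝ) (hμ : μ = ‖x - y‖ ^ 2) (hν : ν = ‖y - z‖ ^ 2)
    (hρ : ρ = μ * ν - χ ^ 2)
    (h0 : ρ = 0) (hpos : 0 ≤ χ) :
    z ∈ haugH x y ∩ haugH y z ∧
      ∀ h ∈ haugH x y ∩ haugH y z, ‖x - z‖ ≤ ‖x - h‖ := by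
  subst hχ hμ hν hρ
  have hz1 : z ∈ haugH x y := by
    simp only [haugH, Set.mem_setOf_eq]
    have hzy : z - y = -(y - z) := by abel
    rw [hzy, inner_neg_left, real_inner_comm]
    linarith
  have hz2 : z ∈ haugH y z := by
    simp [haugH]
  refine ⟨⟨hz1, hz2⟩, ?_⟩
  intro h hh
  obtain ⟨hh1, hh2⟩ := hh
  simp only [haugH, Set.mem_setOf_eq] at hh1 hh2
  -- key identity: ν • (x - y) = χ • (y - z)
  have key : (‖y - z‖ ^ 2 : ℝ) • (x - y) = ⟪x - y, y - z⟫_ℝ • (y - z) := by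
    have hn : ‖(‖y - z‖ ^ 2 : ℝ) • (x - y) - ⟪x - y, y - z⟫_ℝ • (y - z)‖ ^ 2 = 0 := by
      rw [norm_sub_sq_real]
      rw [inner_smul_left, inner_smul_right]
      rw [norm_smul, norm_smul]
      simp only [RCLike.conj_to_real, Real.norm_eq_abs]
      rw [mul_pow, mul_pow, sq_abs, sq_abs]
      nlinarith [sq_nonneg ‖y - z‖]
    have := pow_eq_zero_iff (n := 2) (by norm_num) |>.mp hn
    rw [norm_eq_zero] at this
    exact sub_eq_zero.mp this
  have hinner : ⟪x - z, h - z⟫_ℝ ≤ 0 := by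
    have hsplit : x - z = (x - y) + (y - z) := by abel
    rw [hsplit, inner_add_left]
    rcases eq_or_lt_of_le (norm_nonneg (y - z)) with hyz | hyz
    · -- y = z
      have hyz' : y - z = 0 := by
        rw [← norm_eq_zero]; exact hyz.symm
      have hy : y = z := by rwa [sub_eq_zero] at hyz'
      rw [hyz', inner_zero_left, add_zero, ← hy, real_inner_comm]
      exact hh1
    · -- ν > 0
      have hν : (0:ℝ) < ‖y - z‖ ^ 2 := by positivity
      have h1 : (‖y - z‖ ^ 2 : ℝ) * ⟪x - y, h - z⟫_ℝ = ⟪x - y, y - z⟫_ℝ * ⟪y - z, h - z⟫_ℝ := by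
        rw [← real_inner_smul_left, ← real_inner_smul_left, key]
      have h2 : ⟪y - z, h - z⟫_ℝ ≤ 0 := by rw [real_inner_comm]; exact hh2
      have h3 : ⟪x - y, h - z⟫_ℝ ≤ 0 := by
        nlinarith
      nlinarith
  have hexp : ‖x - h‖ ^ 2 = ‖x - z‖ ^ 2 - 2 * ⟪x - z, h - z⟫_ℝ + ‖h - z‖ ^ 2 := by
    have : x - h = (x - z) - (h - z) := by abel
    rw [this, norm_sub_sq_real]
  have hle : ‖x - z‖ ^ 2 ≤ ‖x - h‖ ^ 2 := by nlinarith [sq_nonneg ‖h - z‖]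
  nlinarith [norm_nonneg (x - z), norm_nonneg (x - h)]
end

section
/- Let K be a real Hilbert space, (x,y,z) ∈ K³, H(x,y) = {h : ⟨h-y,x-y⟩ ≤ 0}, χ = ⟨x-y,y-z⟩, μ = ‖x-y‖², ν = ‖y-z‖², ρ = μν - χ². If ρ > 0 and χν ≥ ρ, then the projection of x onto H(x,y) ∩ H(y,z) is x + (1 + χ/ν)(z - y). -/
open scoped InnerProductSpace

/-- If `ρ > 0` and `χν ≥ ρ`, then the projection of `x` onto
`H(x,y) ∩ H(y,z)` is `x + (1 + χ/ν)(z - y)`. -/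
theorem haugazeau_proj_case2
    {E : Type*} [NormedAddCommGroup E] [InnerProductSpace ℝ E] [CompleteSpace E]
    (x y z : E)
    (χ μ ν ρ : ℝ)
    (hχ : χ = ⟪x - y, y - z⟫_ℝ) (hμ : μ = ‖x - y‖ ^ 2) (hν : ν = ‖y - z‖ ^ 2)
    (hρ : ρ = μ * ν - χ ^ 2)
    (h0 : 0 < ρ) (hcase : χ * ν ≥ ρ) :
    x + (1 + χ / ν) • (z - y) ∈ haugH x y ∩ haugH y z ∧
      ∀ h ∈ haugH x y ∩ haugH y z,
        ‖x - (x + (1 + χ / ν) • (z - y))‖ ≤ ‖x - h‖ := by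
  have hνnn : (0:ℝ) ≤ ν := hν ▸ sq_nonneg _
  have hμnn : (0:ℝ) ≤ μ := hμ ▸ sq_nonneg _
  have hν0 : 0 < ν := by nlinarith [sq_nonneg χ]
  have hχ0 : 0 < χ := by nlinarith
  set α : ℝ := 1 + χ / ν with hα
  have hα0 : 0 < α := by positivity
  have hχ' : ⟪x - y, y - z⟫_ℝ = χ := hχ.symm
  have hχ'' : ⟪y - z, x - y⟫_ℝ = χ := by rw [real_inner_comm]; exact hχ'
  have hμe : ⟪x - y, x - y⟫_ℝ = μ := by rw [real_inner_self_eq_norm_sq, hμ]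
  have hνe : ⟪y - z, y - z⟫_ℝ = ν := by rw [real_inner_self_eq_norm_sq, hν]
  have hpy : x + α • (z - y) - y = (x - y) - α • (y - z) := by module
  have hpz : x + α • (z - y) - z = (x - y) + (1 - α) • (y - z) := by module
  have hmem1 : ⟪x + α • (z - y) - y, x - y⟫_ℝ ≤ 0 := by
    rw [hpy, inner_sub_left, real_inner_smul_left, hμe, hχ'']
    have : μ - α * χ = (ρ - χ * ν) / ν := by rw [hα, hρ]; field_simp; ring
    rw [this]
    apply div_nonpos_of_nonpos_of_nonneg _ hνnn
    linarith
  have hbdry : ⟪x + α • (z - y) - z, y - z⟫_ℝ = 0 := by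
    rw [hpz, inner_add_left, real_inner_smul_left, hχ', hνe]
    rw [hα]; field_simp; ring
  refine ⟨⟨hmem1, le_of_eq hbdry⟩, ?_⟩
  intro h hh
  obtain ⟨hh1, hh2⟩ := hh
  have hh2' : ⟪y - z, h - z⟫_ℝ ≤ 0 := by rw [real_inner_comm]; exact hh2
  have hxp : x - (x + α • (z - y)) = α • (y - z) := by module
  have hxh : x - h = α • (y - z) + (x + α • (z - y) - h) := by module
  have hkey : 0 ≤ ⟪α • (y - z), x + α • (z - y) - h⟫_ℝ := by
    have hdcmp : x + α • (z - y) - h = (x + α • (z - y) - z) - (h - z) := by module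
    rw [real_inner_smul_left, hdcmp, inner_sub_right]
    have h1 : ⟪y - z, x + α • (z - y) - z⟫_ℝ = 0 := by
      rw [real_inner_comm]; exact hbdry
    rw [h1]
    nlinarith
  have hsq : ‖x - (x + α • (z - y))‖ ^ 2 ≤ ‖x - h‖ ^ 2 := by
    rw [hxp, hxh, norm_add_sq_real]
    nlinarith [sq_nonneg ‖x + α • (z - y) - h‖]
  have := norm_nonneg (x - (x + α • (z - y)))
  have := norm_nonneg (x - h)
  nlinarith
end

section
/- Let K be a real Hilbert space, (x,y,z) ∈ K³, H(x,y) = {h : ⟨h-y,x-y⟩ ≤ 0}, χ = ⟨x-y,y-z⟩, μ = ‖x-y‖², ν = ‖y-z‖², ρ = μν - χ². If ρ > 0 and χν < ρ, then the projection of x onto H(x,y) ∩ H(y,z) is y + (ν/ρ)(χ(x-y) + μ(z-y)). -/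
open scoped InnerProductSpace

/-- If `ρ > 0` and `χν < ρ`, then the projection of `x` onto
`H(x,y) ∩ H(y,z)` is `y + (ν/ρ)(χ(x-y) + μ(z-y))`. -/
theorem haugazeau_proj_case3
    {E : Type*} [NormedAddCommGroup E] [InnerProductSpace ℝ E] [CompleteSpace E]
    (x y z : E)
    (χ μ ν ρ : ℝ)
    (hχ : χ = ⟪x - y, y - z⟫_ℝ) (hμ : μ = ‖x - y‖ ^ 2) (hν : ν = ‖y - z‖ ^ 2)
    (hρ : ρ = μ * ν - χ ^ 2)
    (h0 : 0 < ρ) (hcase : χ * ν < ρ) :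
    y + (ν / ρ) • (χ • (x - y) + μ • (z - y)) ∈ haugH x y ∩ haugH y z ∧
      ∀ h ∈ haugH x y ∩ haugH y z,
        ‖x - (y + (ν / ρ) • (χ • (x - y) + μ • (z - y)))‖ ≤ ‖x - h‖ := by
  have hρ0 : ρ ≠ 0 := ne_of_gt h0
  set a : E := x - y with ha
  set b : E := z - y with hb
  set p : E := y + (ν / ρ) • (χ • a + μ • b) with hp
  have hab : ⟪a, b⟫_ℝ = -χ := by
    rw [hχ]
    have : y - z = -b := by rw [hb]; abel
    rw [this, inner_neg_right]; ring
  have hba : ⟪b, a⟫_ℝ = -χ := by rw [real_inner_comm]; exact hab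
  have haa : ⟪a, a⟫_ℝ = μ := by
    rw [real_inner_self_eq_norm_sq, hμ]
  have hbb : ⟪b, b⟫_ℝ = ν := by
    rw [real_inner_self_eq_norm_sq, hν, hb, norm_sub_rev]
  have hνnn : 0 ≤ ν := by rw [hν]; positivity
  have hμnn : 0 ≤ μ := by rw [hμ]; positivity
  have hpy : p - y = (ν / ρ) • (χ • a + μ • b) := by rw [hp]; abel
  have hpz : p - z = (ν / ρ) • (χ • a + μ • b) - b := by rw [hp, hb]; abel
  -- p lies on both hyperplanes
  have c1 : ⟪p - y, a⟫_ℝ = 0 := by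
    rw [hpy, real_inner_smul_left, inner_add_left, real_inner_smul_left,
      real_inner_smul_left, haa, hba]
    ring
  have c2 : ⟪p - z, b⟫_ℝ = 0 := by
    rw [hpz, inner_sub_left, real_inner_smul_left, inner_add_left,
      real_inner_smul_left, real_inner_smul_left, hab, hbb]
    field_simp
    rw [hρ]; ring
  have hyz : y - z = -b := by rw [hb]; abel
  constructor
  · constructor
    · show ⟪p - y, x - y⟫_ℝ ≤ 0
      rw [← ha, c1]
    · show ⟪p - z, y - z⟫_ℝ ≤ 0
      rw [hyz, inner_neg_right, c2]; simp
  · intro h hh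
    obtain ⟨h1, h2⟩ := hh
    have h1' : ⟪h - y, a⟫_ℝ ≤ 0 := h1
    have h2' : 0 ≤ ⟪h - z, b⟫_ℝ := by
      have : ⟪h - z, y - z⟫_ℝ ≤ 0 := h2
      rw [hyz, inner_neg_right] at this
      linarith
    -- variational inequality
    have s1 : 0 ≤ ⟪a, p - h⟫_ℝ := by
      have e : ⟪a, p - h⟫_ℝ = ⟪a, p - y⟫_ℝ - ⟪a, h - y⟫_ℝ := by
        rw [← inner_sub_right]; congr 1; abel
      have t1 := real_inner_comm a (p - y)
      have t2 := real_inner_comm a (h - y)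
      rw [e]; linarith
    have s2 : ⟪b, p - h⟫_ℝ ≤ 0 := by
      have e : ⟪b, p - h⟫_ℝ = ⟪b, p - z⟫_ℝ - ⟪b, h - z⟫_ℝ := by
        rw [← inner_sub_right]; congr 1; abel
      have t1 := real_inner_comm b (p - z)
      have t2 := real_inner_comm b (h - z)
      rw [e]; linarith
    have hxp : x - p = a - (ν / ρ) • (χ • a + μ • b) := by rw [hp, ha]; abel
    have key : ⟪x - p, p - h⟫_ℝ =
        ⟪a, p - h⟫_ℝ - (ν / ρ) * (χ * ⟪a, p - h⟫_ℝ + μ * ⟪b, p - h⟫_ℝ) := by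
      rw [hxp, inner_sub_left, real_inner_smul_left, inner_add_left,
        real_inner_smul_left, real_inner_smul_left]
    have hnn : 0 ≤ ⟪x - p, p - h⟫_ℝ := by
      have hmul : 0 ≤ ρ * ⟪x - p, p - h⟫_ℝ := by
        rw [key]
        have expand : ρ * (⟪a, p - h⟫_ℝ - ν / ρ * (χ * ⟪a, p - h⟫_ℝ + μ * ⟪b, p - h⟫_ℝ)) =
            (ρ - χ * ν) * ⟪a, p - h⟫_ℝ - ν * μ * ⟪b, p - h⟫_ℝ := by
          field_simp; ring
        rw [expand]
        nlinarith [mul_nonneg (sub_nonneg.2 hcase.le) s1,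
          mul_nonneg (mul_nonneg hνnn hμnn) (neg_nonneg.2 s2)]
      have := div_nonneg hmul h0.le
      rwa [mul_comm, mul_div_assoc, div_self hρ0, mul_one] at this
    have hxh : x - h = (x - p) + (p - h) := by abel
    have hsq : ‖x - h‖ ^ 2 = ‖x - p‖ ^ 2 + 2 * ⟪x - p, p - h⟫_ℝ + ‖p - h‖ ^ 2 := by
      rw [hxh]
      exact norm_add_sq_real (x - p) (p - h)
    nlinarith [norm_nonneg (x - h), norm_nonneg (x - p), sq_nonneg (‖p - h‖)]
end

section
/- Let C be a nonempty closed convex subset of a real Hilbert space K, x₀ ∈ K, and let (xₙ) be generated by: choose xₙ₊½ ∈ K with C ⊆ H(xₙ, xₙ₊½), then set xₙ₊₁ = projection of x₀ onto H(x₀,xₙ) ∩ H(xₙ, xₙ₊½). Then the sequence is well defined and for all n: ‖xₙ - x₀‖ ≤ ‖xₙ₊₁ - x₀‖ ≤ ‖P_C x₀ - x₀‖, and C ⊆ H(x₀,xₙ) ∩ H(xₙ,xₙ₊½). -/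
open scoped InnerProductSpace
open Filter Topology

lemma haugH_convex {E : Type*} [NormedAddCommGroup E] [InnerProductSpace ℝ E] (x y : E) :
    Convex ℝ (haugH x y) := by
  have h : haugH x y = {h : E | ⟪h, x - y⟫_ℝ ≤ ⟪y, x - y⟫_ℝ} := by
    ext h
    simp [haugH, inner_sub_left, sub_nonpos]
  rw [h]
  intro a ha b hb s t hs ht hst
  simp only [Set.mem_setOf_eq, inner_add_left, real_inner_smul_left] at *
  have h3 : s * ⟪y, x - y⟫_ℝ + t * ⟪y, x - y⟫_ℝ = ⟪y, x - y⟫_ℝ := by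
    rw [← add_mul, hst, one_mul]
  nlinarith [mul_le_mul_of_nonneg_left ha hs, mul_le_mul_of_nonneg_left hb ht]

lemma proj_char {E : Type*} [NormedAddCommGroup E] [InnerProductSpace ℝ E]
    {D : Set E} (hD : Convex ℝ D) {u p : E} (hp : p ∈ D)
    (hmin : ∀ y ∈ D, ‖u - p‖ ≤ ‖u - y‖) :
    ∀ w ∈ D, ⟪u - p, w - p⟫_ℝ ≤ 0 := by
  have hne : Nonempty D := ⟨⟨p, hp⟩⟩
  have heq : ‖u - p‖ = ⨅ w : D, ‖u - w‖ := by
    apply le_antisymm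
    · exact le_ciInf fun w => hmin w w.2
    · exact ciInf_le ⟨0, fun r ⟨w, hw⟩ => hw ▸ norm_nonneg _⟩ (⟨p, hp⟩ : D)
  exact (norm_eq_iInf_iff_real_inner_le_zero hD hp).mp heq

/-- In the Haugazeau iteration, the iterates satisfy
`‖xₙ - x₀‖ ≤ ‖xₙ₊₁ - x₀‖ ≤ ‖P_C x₀ - x₀‖` and
`C ⊆ H(x₀,xₙ) ∩ H(xₙ,xₙ₊½)` for every `n`. -/
theorem haugazeau_iteration_basic
    {E : Type*} [NormedAddCommGroup E] [InnerProductSpace ℝ E] [CompleteSpace E]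
    (C : Set E) (hCne : C.Nonempty) (hCcl : IsClosed C) (hCcv : Convex ℝ C)
    (x₀ : E) (pC : E) (hpC : pC ∈ C ∧ ∀ y ∈ C, ‖x₀ - pC‖ ≤ ‖x₀ - y‖)
    (x xh : ℕ → E) (hx0 : x 0 = x₀)
    (hCH : ∀ n, C ⊆ haugH (x n) (xh n))
    (hproj : ∀ n, x (n + 1) ∈ haugH x₀ (x n) ∩ haugH (x n) (xh n) ∧
      ∀ y ∈ haugH x₀ (x n) ∩ haugH (x n) (xh n), ‖x₀ - x (n + 1)‖ ≤ ‖x₀ - y‖) :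
    ∀ n, (‖x n - x₀‖ ≤ ‖x (n + 1) - x₀‖ ∧ ‖x (n + 1) - x₀‖ ≤ ‖pC - x₀‖) ∧
      C ⊆ haugH x₀ (x n) ∩ haugH (x n) (xh n) := by
  -- main induction: C ⊆ H(x₀, x n)
  have key : ∀ n, C ⊆ haugH x₀ (x n) := by
    intro n
    induction n with
    | zero =>
      intro y _
      simp [haugH, hx0]
    | succ n ih =>
      intro y hy
      have hDcv : Convex ℝ (haugH x₀ (x n) ∩ haugH (x n) (xh n)) :=
        (haugH_convex _ _).inter (haugH_convex _ _)
      have hvar := proj_char hDcv (hproj n).1 (hproj n).2 y ⟨ih hy, hCH n hy⟩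
      have : ⟪y - x (n + 1), x₀ - x (n + 1)⟫_ℝ ≤ 0 := by
        rwa [real_inner_comm] at hvar
      exact this
  intro n
  have hCsub : C ⊆ haugH x₀ (x n) ∩ haugH (x n) (xh n) :=
    fun y hy => ⟨key n hy, hCH n hy⟩
  refine ⟨⟨?_, ?_⟩, hCsub⟩
  · -- ‖x n - x₀‖ ≤ ‖x (n+1) - x₀‖
    have h1 : ⟪x (n + 1) - x n, x₀ - x n⟫_ℝ ≤ 0 := (hproj n).1.1
    have h2 : ⟪x₀ - x n, x (n + 1) - x n⟫_ℝ ≤ 0 := by rwa [real_inner_comm] at h1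
    have hsq : ‖x₀ - x n‖ ^ 2 ≤ ‖x₀ - x (n + 1)‖ ^ 2 := by
      have hid : x₀ - x (n + 1) = (x₀ - x n) - (x (n + 1) - x n) := by abel
      have expand := norm_sub_sq_real (x₀ - x n) (x (n + 1) - x n)
      rw [hid]
      nlinarith [sq_nonneg ‖x (n + 1) - x n‖]
    have := (pow_le_pow_iff_left₀ (norm_nonneg _) (norm_nonneg _) two_ne_zero).mp hsq
    rwa [norm_sub_rev x₀ (x n), norm_sub_rev x₀ (x (n + 1))] at this
  · have := (hproj n).2 pC (hCsub hpC.1)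
    rwa [norm_sub_rev x₀ (x (n + 1)), norm_sub_rev x₀ pC] at this
end

section
/- In the Haugazeau iteration xₙ₊₁ = projection of x₀ onto H(x₀,xₙ) ∩ H(xₙ,xₙ₊½), where C ⊆ H(xₙ,xₙ₊½) at each step, one has Σₙ ‖xₙ₊₁ - xₙ‖² < +∞ and Σₙ ‖xₙ₊½ - xₙ‖² < +∞. -/
open scoped InnerProductSpace
open Filter Topology

lemma haug_pyth {E : Type*} [NormedAddCommGroup E] [InnerProductSpace ℝ E]
    (u v w : E) (h : ⟪w - v, u - v⟫_ℝ ≤ 0) :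
    ‖u - v‖ ^ 2 + ‖w - v‖ ^ 2 ≤ ‖u - w‖ ^ 2 := by
  have hexp : ‖u - w‖ ^ 2 =
      ‖u - v‖ ^ 2 - 2 * ⟪u - v, w - v⟫_ℝ + ‖w - v‖ ^ 2 := by
    have := norm_sub_sq_real (u - v) (w - v)
    simpa [sub_sub_sub_cancel_right] using this
  rw [real_inner_comm] at h
  nlinarith

lemma haug_proj_inner_le {E : Type*} [NormedAddCommGroup E] [InnerProductSpace ℝ E]
    {K : Set E} (hK : Convex ℝ K) {u v : E} (hv : v ∈ K)
    (hmin : ∀ w ∈ K, ‖u - v‖ ≤ ‖u - w‖) :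
    ∀ w ∈ K, ⟪u - v, w - v⟫_ℝ ≤ 0 := by
  rw [← norm_eq_iInf_iff_real_inner_le_zero hK hv]
  haveI : Nonempty K := ⟨⟨v, hv⟩⟩
  apply le_antisymm
  · exact le_ciInf fun w => hmin w w.2
  · exact ciInf_le ⟨0, by rintro _ ⟨w, rfl⟩; exact norm_nonneg _⟩ (⟨v, hv⟩ : K)

/-- In the Haugazeau iteration, `Σₙ ‖xₙ₊₁ - xₙ‖² < +∞` and
`Σₙ ‖xₙ₊½ - xₙ‖² < +∞`. -/
theorem haugazeau_iteration_summable
    {E : Type*} [NormedAddCommGroup E] [InnerProductSpace ℝ E] [CompleteSpace E]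
    (C : Set E) (hCne : C.Nonempty) (hCcl : IsClosed C) (hCcv : Convex ℝ C)
    (x₀ : E)
    (x xh : ℕ → E) (hx0 : x 0 = x₀)
    (hCH : ∀ n, C ⊆ haugH (x n) (xh n))
    (hproj : ∀ n, x (n + 1) ∈ haugH x₀ (x n) ∩ haugH (x n) (xh n) ∧
      ∀ y ∈ haugH x₀ (x n) ∩ haugH (x n) (xh n), ‖x₀ - x (n + 1)‖ ≤ ‖x₀ - y‖) :
    Summable (fun n => ‖x (n + 1) - x n‖ ^ 2) ∧
      Summable (fun n => ‖xh n - x n‖ ^ 2) := by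
  obtain ⟨c, hc⟩ := hCne
  -- C is always contained in haugH x₀ (x n)
  have hQ : ∀ n, C ⊆ haugH x₀ (x n) := by
    intro n
    induction n with
    | zero => intro z _; simp [haugH, hx0]
    | succ n ih =>
      intro z hz
      have hzQ : z ∈ haugH x₀ (x n) ∩ haugH (x n) (xh n) := ⟨ih hz, hCH n hz⟩
      have hconv : Convex ℝ (haugH x₀ (x n) ∩ haugH (x n) (xh n)) :=
        (haugH_convex _ _).inter (haugH_convex _ _)
      have := haug_proj_inner_le hconv (hproj n).1 (hproj n).2 z hzQ
      simpa [haugH, Set.mem_setOf_eq, real_inner_comm] using this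
  -- Fejér-type monotonicity
  have hstep : ∀ n, ‖x₀ - x n‖ ^ 2 + ‖x (n + 1) - x n‖ ^ 2 ≤ ‖x₀ - x (n + 1)‖ ^ 2 := by
    intro n
    exact haug_pyth x₀ (x n) (x (n + 1)) ((hproj n).1.1)
  have hbound : ∀ n, ‖x₀ - x n‖ ^ 2 ≤ ‖x₀ - c‖ ^ 2 := by
    intro n
    have := haug_pyth x₀ (x n) c (hQ n hc)
    nlinarith [sq_nonneg ‖c - x n‖]
  have hsum : ∀ N, ∑ k ∈ Finset.range N, ‖x (k + 1) - x k‖ ^ 2 ≤ ‖x₀ - x N‖ ^ 2 := by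
    intro N
    induction N with
    | zero => simp
    | succ N ih =>
      rw [Finset.sum_range_succ]
      have := hstep N
      linarith
  have S1 : Summable (fun n => ‖x (n + 1) - x n‖ ^ 2) := by
    apply summable_of_sum_range_le (c := ‖x₀ - c‖ ^ 2) (fun n => by positivity)
    intro N
    exact (hsum N).trans (hbound N)
  refine ⟨S1, Summable.of_nonneg_of_le (fun n => by positivity) (fun n => ?_) S1⟩
  -- ‖xh n - x n‖ ≤ ‖x (n+1) - x n‖
  have h1 : ⟪x (n + 1) - xh n, x n - xh n⟫_ℝ ≤ 0 := (hproj n).1.2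
  have hdecomp : x (n + 1) - xh n = (x (n + 1) - x n) + (x n - xh n) := by abel
  rw [hdecomp, inner_add_left, real_inner_self_eq_norm_sq] at h1
  have hcs := abs_real_inner_le_norm (x (n + 1) - x n) (x n - xh n)
  have habs := abs_le.mp hcs
  have hrev : ‖xh n - x n‖ = ‖x n - xh n‖ := norm_sub_rev _ _
  rw [hrev]
  nlinarith [norm_nonneg (x n - xh n), norm_nonneg (x (n + 1) - x n)]
end
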